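/- arXiv:1901.11320 — 7 statements merged into one kernel-verified Lean document; each statement's English description precedes it below -/
import Mathlib

section
/- Let p be an odd prime, n an odd positive integer, and z a nonzero element of F_{p^n}. Then the number of quadratic residues of F_{p^n} lying in the kernel of the map x ↦ Tr(zx) (trace to F_p) equals (p^{n-1} + 1)/2. -/
/-- For `p` an odd prime, `n` odd, and `z ≠ 0` in the field `F` of order
`p ^ n`, the number of quadratic residues in the kernel of the additive map
`x ↦ Tr(z * x)` (the field trace down to `F_p`) is `(p ^ (n - 1) + 1) / 2`. -/
theorem stmt_5 (p n : ℕ) (hp : p.Prime) (hpodd : Odd p) (hn : Odd n) (hn0 : 0 < n)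
    (F : Type*) [Field F] [Fintype F] [Algebra (ZMod p) F]
    (hF : Fintype.card F = p ^ n) (z : F) (hz : z ≠ 0) :
    Nat.card {x : F // Algebra.trace (ZMod p) F (z * x) = 0 ∧ ∃ y : F, y ^ 2 = x} =
      (p ^ (n - 1) + 1) / 2 := by
  classical
  haveI : Fact p.Prime := ⟨hp⟩
  obtain ⟨k, hk⟩ := hpodd
  have hp2 : p ≠ 2 := by intro h; omega
  have hp3 : 2 < p := by have := hp.two_le; omega
  haveI : Fact (2 < p) := ⟨hp3⟩
  haveI : CharP F p := charP_of_injective_ringHom (algebraMap (ZMod p) F).injective p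
  have hchar : ringChar F = p := ringChar.eq F p
  have hchar2 : ringChar F ≠ 2 := by rw [hchar]; exact hp2
  have hcharp2 : ringChar (ZMod p) ≠ 2 := by rw [ZMod.ringChar_zmod_n]; exact hp2
  -- a nonsquare scalar
  obtain ⟨c, hc⟩ := FiniteField.exists_nonsquare (F := ZMod p) hcharp2
  have hc0 : c ≠ 0 := fun h => hc (h ▸ (IsSquare.zero : IsSquare (0 : ZMod p)))
  set C : F := algebraMap (ZMod p) F c with hCdef
  have hC0 : C ≠ 0 := fun h => hc0 ((algebraMap (ZMod p) F).injective (by rw [map_zero, ← hCdef]; exact h))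
  -- c ^ ((p-1)/2) = -1
  have hcard : Fintype.card (ZMod p) = p := ZMod.card p
  have hk2 : p / 2 = k := by omega
  have hck : c ^ k = -1 := by
    have hd := FiniteField.pow_dichotomy (F := ZMod p) hcharp2 hc0
    rw [hcard, hk2] at hd
    rcases hd with h | h
    · exact absurd ((FiniteField.isSquare_iff hcharp2 hc0).mpr
        (by rw [hcard, hk2]; exact h)) hc
    · exact h
  -- geometric sum and parity
  set s : ℕ := ∑ i ∈ Finset.range n, p ^ i with hsdef
  have h1p : 1 ≤ p := hp.one_lt.le
  have h1pn : 1 ≤ p ^ n := Nat.one_le_pow _ _ hp.pos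
  have hgeom : p ^ n - 1 = s * (p - 1) := by
    have hg := geom_sum_mul (p : ℤ) n
    zify [h1p, h1pn]
    push_cast [hsdef]
    linarith [hg]
  have hs_odd : Odd s := by
    have hmod : s % 2 = (∑ i ∈ Finset.range n, p ^ i % 2) % 2 := Finset.sum_nat_mod _ _ _
    have hones : ∀ i ∈ Finset.range n, p ^ i % 2 = 1 := fun i _ =>
      Nat.odd_iff.mp (Odd.pow ⟨k, hk⟩)
    rw [Finset.sum_congr rfl hones] at hmod
    simp only [Finset.sum_const, Finset.card_range, smul_eq_mul, mul_one] at hmod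
    rw [Nat.odd_iff, hmod, Nat.odd_iff.mp hn]
  have hm : p ^ n / 2 = k * s := by
    have hp1 : p - 1 = 2 * k := by omega
    have h2 : s * (p - 1) = 2 * (k * s) := by rw [hp1]; ring
    omega
  -- C ^ (card F / 2) = -1
  have hCm : C ^ (Fintype.card F / 2) = -1 := by
    have hcs : c ^ (k * s) = -1 := by rw [pow_mul, hck, hs_odd.neg_one_pow]
    rw [hF, hm, hCdef, ← map_pow, hcs, map_neg, map_one]
  have hne11 : (-1 : F) ≠ 1 := CharP.neg_one_ne_one F p
  -- key: multiplication by C swaps squares and nonsquares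
  have key : ∀ x : F, x ≠ 0 → (IsSquare x ↔ ¬ IsSquare (C * x)) := by
    intro x hx0
    have hCx0 : C * x ≠ 0 := mul_ne_zero hC0 hx0
    rw [FiniteField.isSquare_iff hchar2 hx0, FiniteField.isSquare_iff hchar2 hCx0,
      mul_pow, hCm]
    rcases FiniteField.pow_dichotomy hchar2 hx0 with h | h <;> rw [h] <;>
      simp [hne11, hne11.symm]
  -- trace facts
  have htr_surj : Function.Surjective (Algebra.trace (ZMod p) F) :=
    Algebra.trace_surjective (ZMod p) F
  set φ : F →ₗ[ZMod p] ZMod p :=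
    (Algebra.trace (ZMod p) F).comp (LinearMap.mulLeft (ZMod p) z) with hφdef
  have hφ : ∀ x, φ x = Algebra.trace (ZMod p) F (z * x) := fun x => rfl
  have hφ_surj : Function.Surjective φ := by
    intro a
    obtain ⟨w, hw⟩ := htr_surj a
    exact ⟨z⁻¹ * w, by rw [hφ, ← mul_assoc, mul_inv_cancel₀ hz, one_mul, hw]⟩
  have hcard_ker : Nat.card (LinearMap.ker φ) * p = p ^ n := by
    have h := Submodule.card_eq_card_quotient_mul_card (LinearMap.ker φ)
    have heq : Nat.card (F ⧸ LinearMap.ker φ) = p := by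
      rw [Nat.card_congr (φ.quotKerEquivOfSurjective hφ_surj).toEquiv,
        Nat.card_eq_fintype_card, hcard]
    rw [heq, Nat.card_eq_fintype_card, hF] at h
    omega
  -- trace-kernel scaling lemma
  have htr_scale : ∀ (a : ZMod p) (x : F),
      Algebra.trace (ZMod p) F (z * x) = 0 →
      Algebra.trace (ZMod p) F (z * (algebraMap (ZMod p) F a * x)) = 0 := by
    intro a x hx
    have : z * (algebraMap (ZMod p) F a * x) = a • (z * x) := by
      rw [Algebra.smul_def]; ring
    rw [this, map_smul, hx, smul_zero]
  -- finset counting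
  set K : Finset F := Finset.univ.filter
    (fun x => Algebra.trace (ZMod p) F (z * x) = 0) with hKdef
  have hKmem : ∀ x : F, x ∈ K ↔ Algebra.trace (ZMod p) F (z * x) = 0 := by
    intro x; simp [hKdef]
  have hKcard : K.card * p = p ^ n := by
    have hkk : Nat.card (LinearMap.ker φ) = K.card := by
      rw [Nat.card_eq_fintype_card, ← Fintype.card_coe K]
      apply Fintype.card_congr
      exact Equiv.subtypeEquivRight (fun x => by
        rw [LinearMap.mem_ker, hφ]; exact (hKmem x).symm)
    rw [← hkk]; exact hcard_ker
  set A : Finset F := K.filter IsSquare with hAdef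
  set B : Finset F := K.filter (fun x => ¬ IsSquare x) with hBdef
  have hAB : A.card + B.card = K.card :=
    Finset.card_filter_add_card_filter_not (fun x => IsSquare x)
  have h0A : (0 : F) ∈ A := by
    rw [hAdef, Finset.mem_filter, hKmem]
    exact ⟨by simp, IsSquare.zero⟩
  have hCinv : algebraMap (ZMod p) F c⁻¹ = C⁻¹ := by rw [map_inv₀, hCdef]
  have hB : B.card = (A.erase 0).card := by
    apply Finset.card_bij' (fun x _ => C⁻¹ * x) (fun x _ => C * x)
    · intro x hx
      rw [hBdef, Finset.mem_filter, hKmem] at hx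
      have hx0 : x ≠ 0 := fun h => hx.2 (h ▸ IsSquare.zero)
      have h0 : C⁻¹ * x ≠ 0 := mul_ne_zero (inv_ne_zero hC0) hx0
      rw [Finset.mem_erase, hAdef, Finset.mem_filter, hKmem]
      refine ⟨h0, ?_, ?_⟩
      · rw [← hCinv]; exact htr_scale c⁻¹ x hx.1
      · refine (key _ h0).mpr ?_
        rw [← mul_assoc, mul_inv_cancel₀ hC0, one_mul]
        exact hx.2
    · intro x hx
      rw [Finset.mem_erase, hAdef, Finset.mem_filter, hKmem] at hx
      rw [hBdef, Finset.mem_filter, hKmem]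
      exact ⟨htr_scale c x hx.2.1, (key x hx.1).mp hx.2.2⟩
    · intro x _; rw [← mul_assoc, mul_inv_cancel₀ hC0, one_mul]
    · intro x _; rw [← mul_assoc, inv_mul_cancel₀ hC0, one_mul]
  have hAcard : 1 ≤ A.card := Finset.card_pos.mpr ⟨0, h0A⟩
  have hErase : (A.erase 0).card = A.card - 1 := Finset.card_erase_of_mem h0A
  -- final count
  have hNat : Nat.card {x : F // Algebra.trace (ZMod p) F (z * x) = 0 ∧ ∃ y : F, y ^ 2 = x}
      = A.card := by
    rw [Nat.card_eq_fintype_card, Fintype.card_subtype, hAdef, hKdef, Finset.filter_filter]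
    congr 1
    apply Finset.filter_congr
    intro x _
    constructor
    · rintro ⟨h1, y, rfl⟩; exact ⟨h1, ⟨y, sq y⟩⟩
    · rintro ⟨h1, r, rfl⟩; exact ⟨h1, ⟨r, sq r⟩⟩
  rw [hNat]
  have hpn1 : p ^ n = p ^ (n - 1) * p := by
    conv_lhs => rw [show n = (n - 1) + 1 by omega]
    ring
  rw [hpn1] at hKcard
  have hK' : K.card = p ^ (n - 1) := Nat.eq_of_mul_eq_mul_right hp.pos hKcard
  omega
end

section
/- Let p be an odd prime, j ≥ 1, and let k, l be integers with 0 ≤ k, l ≤ (p^j - 1)/2 and k + l < p^j - 1. Then ∑_{m=0}^{p^j - 1} C(m,k) · C(m,l) ≡ 0 (mod p). -/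
/-- Hockey stick: `∑_{m<n} C(m,r) = C(n,r+1)`. -/
lemma hockey_stick (n r : ℕ) :
    ∑ m ∈ Finset.range n, m.choose r = n.choose (r + 1) := by
  induction n with
  | zero => simp
  | succ n ih =>
    rw [Finset.sum_range_succ, ih, Nat.choose_succ_succ' n r, Nat.add_comm]

/-- Product of binomials expansion. -/
lemma choose_mul_choose_expand (k l m : ℕ) :
    m.choose k * m.choose l
      = ∑ i ∈ Finset.range (l + 1),
          m.choose (k + i) * ((k + i).choose k * k.choose (l - i)) := by
  rcases lt_or_ge m k with hmk | hmk
  · rw [Nat.choose_eq_zero_of_lt hmk, Nat.zero_mul]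
    refine (Finset.sum_eq_zero fun i _ => ?_).symm
    rw [Nat.choose_eq_zero_of_lt (lt_of_lt_of_le hmk (Nat.le_add_right k i)),
      Nat.zero_mul]
  · have hm : m = m - k + k := (Nat.sub_add_cancel hmk).symm
    have hvd : m.choose l
        = ∑ i ∈ Finset.range (l + 1), (m - k).choose i * k.choose (l - i) := by
      conv_lhs => rw [hm, Nat.add_choose_eq]
      exact Finset.Nat.sum_antidiagonal_eq_sum_range_succ
        (fun a b => (m - k).choose a * k.choose b) l
    rw [hvd, Finset.mul_sum]
    refine Finset.sum_congr rfl fun i _ => ?_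
    rcases le_or_gt (k + i) m with him | him
    · have := Nat.choose_mul (n := m) (k := k + i) (s := k) (Nat.le_add_right k i)
      rw [Nat.add_sub_cancel_left] at this
      rw [← mul_assoc, ← this]
      ring
    · rw [Nat.choose_eq_zero_of_lt him, Nat.choose_eq_zero_of_lt (by omega : m - k < i)]
      ring

/-- For `p` an odd prime, `j ≥ 1`, and `0 ≤ k, l ≤ (p^j - 1)/2` with
`k + l < p^j - 1`, the sum `∑_{m=0}^{p^j-1} C(m,k)·C(m,l)` vanishes mod `p`. -/
theorem stmt_8 (p j : ℕ) (hp : p.Prime) (hodd : Odd p) (hj : 1 ≤ j)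
    (k l : ℕ) (hk : k ≤ (p ^ j - 1) / 2) (hl : l ≤ (p ^ j - 1) / 2)
    (hkl : k + l < p ^ j - 1) :
    ((∑ m ∈ Finset.range (p ^ j), m.choose k * m.choose l : ℕ) : ZMod p) = 0 := by
  have hsum : ∑ m ∈ Finset.range (p ^ j), m.choose k * m.choose l
      = ∑ i ∈ Finset.range (l + 1),
          (p ^ j).choose (k + i + 1) * ((k + i).choose k * k.choose (l - i)) := by
    simp_rw [choose_mul_choose_expand k l]
    rw [Finset.sum_comm]
    refine Finset.sum_congr rfl fun i _ => ?_
    rw [← Finset.sum_mul, hockey_stick]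
  rw [hsum]
  push_cast
  refine Finset.sum_eq_zero fun i hi => ?_
  have hil : i ≤ l := Nat.lt_succ_iff.mp (Finset.mem_range.mp hi)
  have hdvd : p ∣ (p ^ j).choose (k + i + 1) :=
    Nat.Prime.dvd_choose_pow hp (by omega) (by omega)
  have : ((p ^ j).choose (k + i + 1) : ZMod p) = 0 := by
    exact_mod_cast (ZMod.natCast_eq_zero_iff _ _).mpr hdvd
  rw [this, zero_mul]
end

section
/- Let p be an odd prime and j ≥ 1. Then ∑_{m=0}^{p^j - 1} C(m, (p^j - 1)/2)^2 ≡ (-1)^{j(p-1)/2} (mod p). -/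
open Finset

/-- Key cast lemma: for `p = 2q+1` prime and `i ≤ q`,
`C(q+i, q) ≡ (-1)^i C(q, i) (mod p)`. -/
lemma aux_choose_cast (p q : ℕ) (hp : p.Prime) (hpq : p = 2 * q + 1) :
    ∀ i, i ≤ q → ((Nat.choose (q + i) q : ℕ) : ZMod p) = (-1) ^ i * (Nat.choose q i : ℕ) := by
  haveI : Fact p.Prime := ⟨hp⟩
  haveI : NeZero p := ⟨hp.pos.ne'⟩
  intro i
  induction i with
  | zero => simp
  | succ i ih =>
    intro hi
    have hi' : i ≤ q := Nat.le_of_succ_le hi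
    have ih' := ih hi'
    have h1 : (q + i + 1) * Nat.choose (q + i) i = Nat.choose (q + i + 1) (i + 1) * (i + 1) :=
      Nat.add_one_mul_choose_eq (q + i) i
    have hs1 : Nat.choose (q + i) i = Nat.choose (q + i) q := by
      have := Nat.choose_symm (n := q + i) (k := i) (Nat.le_add_left i q)
      simpa [Nat.add_sub_cancel] using this.symm
    have hs2 : Nat.choose (q + i + 1) (i + 1) = Nat.choose (q + i + 1) q := by
      have h := Nat.choose_symm (n := q + i + 1) (k := i + 1) (by omega)
      have h' : q + i + 1 - (i + 1) = q := by omega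
      rw [h'] at h
      exact h.symm
    rw [hs1, hs2] at h1
    have h2 : Nat.choose q (i + 1) * (i + 1) = Nat.choose q i * (q - i) :=
      Nat.choose_succ_right_eq q i
    have hneg : ((q + i + 1 : ℕ) : ZMod p) = -((q - i : ℕ) : ZMod p) := by
      have hsum : ((q + i + 1) + (q - i) : ℕ) = p := by omega
      have h0 : (((q + i + 1) + (q - i) : ℕ) : ZMod p) = 0 := by
        rw [hsum]; exact ZMod.natCast_self p
      rw [Nat.cast_add] at h0
      exact eq_neg_of_add_eq_zero_left h0
    have hu : ((i + 1 : ℕ) : ZMod p) ≠ 0 := by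
      intro h
      rw [ZMod.natCast_eq_zero_iff] at h
      have hdvd := h
      have := Nat.le_of_dvd (by omega) hdvd
      omega
    apply mul_right_cancel₀ hu
    have hc1 : ((q + i + 1 : ℕ) : ZMod p) * ((Nat.choose (q + i) q : ℕ) : ZMod p)
        = ((Nat.choose (q + i + 1) q : ℕ) : ZMod p) * ((i + 1 : ℕ) : ZMod p) := by
      exact_mod_cast congrArg (fun n : ℕ => (n : ZMod p)) h1
    have hc2 : ((Nat.choose q (i + 1) : ℕ) : ZMod p) * ((i + 1 : ℕ) : ZMod p)
        = ((Nat.choose q i : ℕ) : ZMod p) * ((q - i : ℕ) : ZMod p) := by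
      exact_mod_cast congrArg (fun n : ℕ => (n : ZMod p)) h2
    calc ((Nat.choose (q + i + 1) q : ℕ) : ZMod p) * ((i + 1 : ℕ) : ZMod p)
        = ((q + i + 1 : ℕ) : ZMod p) * ((Nat.choose (q + i) q : ℕ) : ZMod p) := hc1.symm
      _ = -((q - i : ℕ) : ZMod p) * ((-1) ^ i * (Nat.choose q i : ℕ)) := by rw [hneg, ih']
      _ = (-1) ^ (i + 1) * (((Nat.choose q i : ℕ) : ZMod p) * ((q - i : ℕ) : ZMod p)) := by
          ring
      _ = (-1) ^ (i + 1) * (Nat.choose q (i + 1) : ℕ) * ((i + 1 : ℕ) : ZMod p) := by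
          rw [← hc2]; ring

/-- `∑ i ≤ q, C(q,i)² = C(2q, q)`. -/
lemma aux_sum_sq_choose (q : ℕ) :
    ∑ i ∈ Finset.range (q + 1), (Nat.choose q i) ^ 2 = Nat.choose (2 * q) q := by
  rw [two_mul, Nat.add_choose_eq, Finset.Nat.sum_antidiagonal_eq_sum_range_succ_mk]
  refine Finset.sum_congr rfl fun k hk => ?_
  rw [Finset.mem_range] at hk
  rw [Nat.choose_symm (by omega), sq]

/-- Single digit sum: `∑_{d<p} C(d, (p-1)/2)² ≡ (-1)^((p-1)/2) (mod p)`. -/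
lemma aux_single_digit (p q : ℕ) (hp : p.Prime) (hpq : p = 2 * q + 1) :
    ((∑ d ∈ Finset.range p, (Nat.choose d q) ^ 2 : ℕ) : ZMod p) = (-1) ^ q := by
  have key := aux_choose_cast p q hp hpq
  push_cast
  have hr : Finset.range p = Finset.range (q + (q + 1)) := by
    congr 1
    omega
  rw [hr, Finset.sum_range_add]
  have h0 : ∑ d ∈ Finset.range q, ((Nat.choose d q : ℕ) : ZMod p) ^ 2 = 0 := by
    apply Finset.sum_eq_zero
    intro d hd
    rw [Finset.mem_range] at hd
    rw [Nat.choose_eq_zero_of_lt hd]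
    simp
  rw [h0, zero_add]
  have h1 : ∀ i ∈ Finset.range (q + 1),
      ((Nat.choose (q + i) q : ℕ) : ZMod p) ^ 2 = ((Nat.choose q i : ℕ) : ZMod p) ^ 2 := by
    intro i hi
    rw [Finset.mem_range] at hi
    rw [key i (by omega)]
    rw [mul_pow, ← pow_mul, mul_comm i 2, pow_mul]
    simp
  rw [Finset.sum_congr rfl h1]
  have h2 : ∑ i ∈ Finset.range (q + 1), ((Nat.choose q i : ℕ) : ZMod p) ^ 2
      = ((Nat.choose (2 * q) q : ℕ) : ZMod p) := by
    rw [← aux_sum_sq_choose q]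
    push_cast
    rfl
  rw [h2]
  have h3 : ((Nat.choose (q + q) q : ℕ) : ZMod p) = (-1) ^ q * (Nat.choose q q : ℕ) :=
    key q le_rfl
  rw [two_mul, h3, Nat.choose_self]
  simp

/-- Lucas step. -/
lemma aux_lucas (p a b k q : ℕ) (hp : p.Prime) (hb : b < p) (hq : q < p) :
    ((Nat.choose (a * p + b) (k * p + q) : ℕ) : ZMod p)
      = ((Nat.choose a k : ℕ) : ZMod p) * ((Nat.choose b q : ℕ) : ZMod p) := by
  haveI : Fact p.Prime := ⟨hp⟩
  have h := Choose.choose_modEq_choose_mod_mul_choose_div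
    (n := a * p + b) (k := k * p + q) (p := p)
  have hmod1 : (a * p + b) % p = b := by
    rw [Nat.add_comm, Nat.add_mul_mod_self_right, Nat.mod_eq_of_lt hb]
  have hmod2 : (k * p + q) % p = q := by
    rw [Nat.add_comm, Nat.add_mul_mod_self_right, Nat.mod_eq_of_lt hq]
  have hdiv1 : (a * p + b) / p = a := by
    rw [Nat.add_comm, Nat.add_mul_div_right _ _ hp.pos, Nat.div_eq_of_lt hb, Nat.zero_add]
  have hdiv2 : (k * p + q) / p = k := by
    rw [Nat.add_comm, Nat.add_mul_div_right _ _ hp.pos, Nat.div_eq_of_lt hq, Nat.zero_add]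
  rw [hmod1, hmod2, hdiv1, hdiv2] at h
  have h' := (ZMod.intCast_eq_intCast_iff _ _ _).mpr h
  push_cast at h'
  rw [h']
  ring

/-- Splitting a sum over `range (n * p)` into digits. -/
lemma aux_sum_range_mul {M : Type*} [AddCommMonoid M] (f : ℕ → M) (n p : ℕ) :
    ∑ m ∈ Finset.range (n * p), f m
      = ∑ a ∈ Finset.range n, ∑ b ∈ Finset.range p, f (a * p + b) := by
  induction n with
  | zero => simp
  | succ n ih =>
    rw [Nat.succ_mul, Finset.sum_range_add, ih, Finset.sum_range_succ]

/-- For `p` an odd prime and `j ≥ 1`,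
`∑_{m=0}^{p^j-1} C(m,(p^j-1)/2)² ≡ (-1)^{j(p-1)/2} (mod p)`. -/
theorem stmt_9 (p j : ℕ) (hp : p.Prime) (hodd : Odd p) (hj : 1 ≤ j) :
    ((∑ m ∈ Finset.range (p ^ j), (m.choose ((p ^ j - 1) / 2)) ^ 2 : ℕ) : ZMod p) =
      (-1 : ZMod p) ^ (j * ((p - 1) / 2)) := by
  obtain ⟨q, hq⟩ := hodd
  have hpq : p = 2 * q + 1 := by omega
  have hQ : (p - 1) / 2 = q := by omega
  induction j, hj using Nat.le_induction with
  | base =>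
    rw [pow_one, hQ, aux_single_digit p q hp hpq, one_mul]
  | succ j hj ih =>
    have hpj : Odd (p ^ j) := (Odd.pow (by exact ⟨q, hq⟩) : Odd (p ^ j))
    obtain ⟨k, hk⟩ := hpj
    have hkdef : (p ^ j - 1) / 2 = k := by omega
    have hpj1 : p ^ (j + 1) = 2 * (k * p + q) + 1 := by
      rw [pow_succ, hk, hpq]; ring
    have hK : (p ^ (j + 1) - 1) / 2 = k * p + q := by omega
    rw [hK, show p ^ (j + 1) = p ^ j * p from pow_succ p j]
    push_cast
    rw [aux_sum_range_mul (fun m => ((Nat.choose m (k * p + q) : ℕ) : ZMod p) ^ 2) (p ^ j) p]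
    have hstep : ∀ a ∈ Finset.range (p ^ j), ∀ b ∈ Finset.range p,
        ((Nat.choose (a * p + b) (k * p + q) : ℕ) : ZMod p) ^ 2
          = ((Nat.choose a k : ℕ) : ZMod p) ^ 2 * ((Nat.choose b q : ℕ) : ZMod p) ^ 2 := by
      intro a _ b hbmem
      rw [Finset.mem_range] at hbmem
      rw [aux_lucas p a b k q hp hbmem (by omega), mul_pow]
    have hsum : ∑ a ∈ Finset.range (p ^ j), ∑ b ∈ Finset.range p,
        ((Nat.choose (a * p + b) (k * p + q) : ℕ) : ZMod p) ^ 2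
        = (∑ a ∈ Finset.range (p ^ j), ((Nat.choose a k : ℕ) : ZMod p) ^ 2)
          * (∑ b ∈ Finset.range p, ((Nat.choose b q : ℕ) : ZMod p) ^ 2) := by
      rw [Finset.sum_mul_sum]
      refine Finset.sum_congr rfl fun a ha => Finset.sum_congr rfl fun b hb => ?_
      exact hstep a ha b hb
    rw [hsum]
    have ih' : (∑ a ∈ Finset.range (p ^ j), ((Nat.choose a k : ℕ) : ZMod p) ^ 2)
        = (-1 : ZMod p) ^ (j * q) := by
      rw [← hkdef, ← hQ]
      push_cast at ih
      rw [hQ] at ih ⊢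
      exact ih
    have hsingle : (∑ b ∈ Finset.range p, ((Nat.choose b q : ℕ) : ZMod p) ^ 2)
        = (-1 : ZMod p) ^ q := by
      have := aux_single_digit p q hp hpq
      push_cast at this
      exact this
    rw [ih', hsingle, ← pow_add, hQ]
    congr 1
    ring
end

section
/- Let p be an odd prime, q a power of p, and n a positive integer. Then the exponent of the group UT(n,q) of upper unitriangular n×n matrices over F_q equals p^t, where t = ⌈log_p(n)⌉. -/
/-- The group of upper unitriangular `n × n` matrices over a field, as a
submonoid of the matrix monoid. -/
def UT (n : ℕ) (F : Type*) [Field F] : Submonoid (Matrix (Fin n) (Fin n) F) where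
  carrier := {M | (∀ i j : Fin n, j < i → M i j = 0) ∧ ∀ i : Fin n, M i i = 1}
  one_mem' := by
    refine ⟨fun i j h => Matrix.one_apply_ne (Ne.symm (ne_of_lt h)), ?_⟩
    · intro i
      exact Matrix.one_apply_eq i
  mul_mem' := by
    rintro a b ⟨ha1, ha2⟩ ⟨hb1, hb2⟩
    refine ⟨?_, ?_⟩
    · intro i j hji
      rw [Matrix.mul_apply]
      apply Finset.sum_eq_zero
      intro k _
      rcases lt_or_ge k i with hk | hk
      · rw [ha1 i k hk, zero_mul]
      · rw [hb1 k j (lt_of_lt_of_le hji hk), mul_zero]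
    · intro i
      rw [Matrix.mul_apply, Finset.sum_eq_single i]
      · rw [ha2, hb2, one_mul]
      · intro k _ hk
        rcases lt_or_ge k i with h | h
        · rw [ha1 i k h, zero_mul]
        · rw [hb1 k i (lt_of_le_of_ne h (Ne.symm hk)), mul_zero]
      · intro h
        exact absurd (Finset.mem_univ i) h

open Matrix

/-- Powers of a strictly upper triangular matrix vanish below the `k`-th superdiagonal. -/
lemma UT.strict_pow {n : ℕ} {F : Type*} [Field F] (N : Matrix (Fin n) (Fin n) F)
    (h : ∀ i j : Fin n, (j : ℕ) ≤ i → N i j = 0) :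
    ∀ k (i j : Fin n), (j : ℕ) < (i : ℕ) + k → (N ^ k) i j = 0 := by
  intro k
  induction k with
  | zero =>
    intro i j hij
    rw [pow_zero]
    exact Matrix.one_apply_ne (by rintro rfl; omega)
  | succ k ih =>
    intro i j hij
    rw [pow_succ', Matrix.mul_apply]
    apply Finset.sum_eq_zero
    intro l _
    rcases le_or_gt (l : ℕ) (i : ℕ) with hl | hl
    · rw [h i l hl, zero_mul]
    · rw [ih l j (by omega), mul_zero]

/-- A strictly upper triangular `n × n` matrix is nilpotent of index at most `n`. -/
lemma UT.strict_pow_self {n : ℕ} {F : Type*} [Field F] (N : Matrix (Fin n) (Fin n) F)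
    (h : ∀ i j : Fin n, (j : ℕ) ≤ i → N i j = 0) {m : ℕ} (hm : n ≤ m) : N ^ m = 0 := by
  ext i j
  rw [UT.strict_pow N h m i j (by omega)]
  rfl

/-- Powers of the nilpotent Jordan block. -/
lemma UT.shift_pow {n : ℕ} {F : Type*} [Field F] :
    ∀ k (i j : Fin n),
      ((Matrix.of fun i j : Fin n => if (i : ℕ) + 1 = j then (1 : F) else 0) ^ k) i j
        = if (i : ℕ) + k = j then 1 else 0 := by
  intro k
  induction k with
  | zero =>
    intro i j
    rw [pow_zero, Matrix.one_apply]
    congr 1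
    simp [Fin.ext_iff, eq_comm]
  | succ k ih =>
    intro i j
    rw [pow_succ', Matrix.mul_apply]
    rcases lt_or_ge ((i : ℕ) + 1) n with hin | hin
    · rw [Finset.sum_eq_single (⟨(i : ℕ) + 1, hin⟩ : Fin n)]
      · rw [ih]
        show (if (i : ℕ) + 1 = (i : ℕ) + 1 then (1 : F) else 0) *
            (if (i : ℕ) + 1 + k = (j : ℕ) then (1 : F) else 0)
            = if (i : ℕ) + (k + 1) = (j : ℕ) then (1 : F) else 0
        rw [if_pos rfl, one_mul, show (i : ℕ) + 1 + k = (i : ℕ) + (k + 1) from by omega]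
      · intro l _ hl
        rw [Matrix.of_apply, if_neg, zero_mul]
        intro hc
        exact hl (Fin.ext (show (l : ℕ) = (i : ℕ) + 1 by omega))
      · intro hmem; exact absurd (Finset.mem_univ _) hmem
    · rw [Finset.sum_eq_zero, if_neg (by omega)]
      intro l _
      rw [Matrix.of_apply, if_neg (by omega), zero_mul]

/-- The exponent of the unitriangular group `UT(n, q)` over the finite field of
order `q = p ^ e` is `p ^ ⌈log_p n⌉`. -/
theorem stmt_11 (p e n : ℕ) (hp : p.Prime) (hodd : Odd p) (he : 0 < e) (hn : 0 < n)
    (F : Type*) [Field F] [Fintype F] (hF : Fintype.card F = p ^ e) :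
    Monoid.exponent (UT n F) = p ^ Nat.clog p n := by
  have hp1 : 1 < p := hp.one_lt
  haveI : Fact p.Prime := ⟨hp⟩
  -- characteristic of F is p
  have hchar : CharP F p := by
    obtain ⟨m, hr, hcard⟩ := FiniteField.card F (ringChar F)
    have : p = ringChar F := by
      have hdvd : p ∣ ringChar F ^ (m : ℕ) := by
        rw [← hcard, hF]; exact dvd_pow_self p he.ne'
      exact ((Nat.prime_dvd_prime_iff_eq hp hr).mp (hp.dvd_of_dvd_pow hdvd))
    rw [this]; exact ringChar.charP F
  haveI := hchar
  haveI : Nonempty (Fin n) := ⟨⟨0, hn⟩⟩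
  haveI : CharP (Matrix (Fin n) (Fin n) F) p := Matrix.charP p
  set t := Nat.clog p n with ht
  have hpt_ge : n ≤ p ^ t := Nat.le_pow_clog hp1 n
  -- every element to the power p^t is 1
  have key : ∀ g : UT n F, g ^ p ^ t = 1 := by
    rintro ⟨M, hM1, hM2⟩
    have hM : M = 1 + (M - 1) := by abel
    have hstrict : ∀ i j : Fin n, (j : ℕ) ≤ i → (M - 1) i j = 0 := by
      intro i j hij
      rcases eq_or_lt_of_le hij with heq | hlt
      · have : j = i := Fin.ext heq
        subst this
        simp [Matrix.sub_apply, hM2 j]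
      · have hji : j < i := hlt
        rw [Matrix.sub_apply, hM1 i j hji,
          Matrix.one_apply_ne (by rintro rfl; omega), sub_zero]
    apply Subtype.ext
    simp only [SubmonoidClass.coe_pow, OneMemClass.coe_one]
    show M ^ p ^ t = 1
    rw [hM, add_pow_char_pow_of_commute p t (Commute.one_left _), one_pow,
      UT.strict_pow_self _ hstrict hpt_ge, add_zero]
  have hdvd : Monoid.exponent (UT n F) ∣ p ^ t :=
    Monoid.exponent_dvd_of_forall_pow_eq_one key
  rcases Nat.eq_zero_or_pos t with ht0 | htpos
  · rw [ht0, pow_zero] at hdvd ⊢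
    exact Nat.dvd_one.mp hdvd
  · -- the Jordan block has order exactly p^t
    set N : Matrix (Fin n) (Fin n) F :=
      Matrix.of fun i j : Fin n => if (i : ℕ) + 1 = j then (1 : F) else 0 with hN
    have hJmem : (1 + N) ∈ UT n F := by
      constructor
      · intro i j hij
        rw [Matrix.add_apply, Matrix.one_apply_ne (Ne.symm (ne_of_lt hij)), hN,
          Matrix.of_apply, if_neg (by omega), add_zero]
      · intro i
        rw [Matrix.add_apply, Matrix.one_apply_eq, hN, Matrix.of_apply,
          if_neg (by omega), add_zero]
    set J : UT n F := ⟨1 + N, hJmem⟩ with hJ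
    have hJpow : ∀ k : ℕ, (J : Matrix (Fin n) (Fin n) F) ^ p ^ k = 1 + N ^ p ^ k := by
      intro k
      rw [hJ]
      show (1 + N) ^ p ^ k = 1 + N ^ p ^ k
      rw [add_pow_char_pow_of_commute p k (Commute.one_left _), one_pow]
    have hne : J ^ p ^ (t - 1) ≠ 1 := by
      intro hc
      have hc' : (J : Matrix (Fin n) (Fin n) F) ^ p ^ (t - 1) = 1 := by
        have := congrArg (Subtype.val) hc
        rwa [SubmonoidClass.coe_pow] at this
      rw [hJpow] at hc'
      have hNz : N ^ p ^ (t - 1) = 0 := by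
        have := congrArg (fun M => M - 1) hc'
        simpa using this
      have hlt : p ^ (t - 1) < n := (Nat.lt_clog_iff_pow_lt hp1).mp (by omega)
      have := congrFun (congrFun hNz ⟨0, hn⟩) ⟨p ^ (t - 1), hlt⟩
      rw [UT.shift_pow] at this
      simp at this
    have horder : orderOf J = p ^ t := by
      have hdvdJ : orderOf J ∣ p ^ t := orderOf_dvd_of_pow_eq_one (key J)
      obtain ⟨s, hs, hso⟩ := (Nat.dvd_prime_pow hp).mp hdvdJ
      rcases eq_or_lt_of_le hs with rfl | hslt
      · exact hso
      · exfalso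
        apply hne
        have : orderOf J ∣ p ^ (t - 1) := by
          rw [hso]; exact pow_dvd_pow p (by omega)
        exact orderOf_dvd_iff_pow_eq_one.mp this
    exact Nat.dvd_antisymm hdvd (horder ▸ Monoid.order_dvd_exponent J)
end

section
/- Let p be an odd prime, q a power of p, n a positive integer, and let P be the group of (2n)×(2n) matrices over F_q of block form [[Lᵀ, A],[0, L⁻¹]] with L ∈ UT(n,q) unitriangular and AL symmetric. If L has order p^k in UT(n,q), then the matrix M = [[Lᵀ,A],[0,L⁻¹]] has order either p^k or p^{k+1}. -/
open Matrix

/-- If `L` is unitriangular of order `p ^ k` and `A L` is symmetric, then the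
symplectic-Sylow element `[[Lᵀ, A], [0, L⁻¹]]` has order `p ^ k` or `p ^ (k+1)`. -/
theorem stmt_13 (p e n k : ℕ) (hp : p.Prime) (hodd : Odd p) (he : 0 < e) (hn : 0 < n)
    (F : Type*) [Field F] [Fintype F] (hF : Fintype.card F = p ^ e)
    (L A : Matrix (Fin n) (Fin n) F)
    (hL1 : ∀ i j : Fin n, j < i → L i j = 0) (hL2 : ∀ i : Fin n, L i i = 1)
    (hAL : (A * L)ᵀ = A * L) (hord : orderOf L = p ^ k) :
    orderOf (Matrix.fromBlocks Lᵀ A 0 L⁻¹) = p ^ k ∨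
      orderOf (Matrix.fromBlocks Lᵀ A 0 L⁻¹) = p ^ (k + 1) := by
  have hpF : (p : F) = 0 := by
    have h := FiniteField.cast_card_eq_zero F
    rw [hF] at h
    push_cast at h
    exact pow_eq_zero_iff he.ne' |>.mp h
  have hLpk : L ^ (p ^ k) = 1 := by rw [← hord]; exact pow_orderOf_eq_one L
  -- L⁻¹ = L ^ (p^k - 1)
  have hpk1 : 0 < p ^ k := pow_pos hp.pos k
  have hLinv : L⁻¹ = L ^ (p ^ k - 1) := by
    apply Matrix.inv_eq_left_inv
    rw [← pow_succ, Nat.sub_add_cancel hpk1, hLpk]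
  have hLinvpk : (L⁻¹) ^ (p ^ k) = 1 := by
    rw [hLinv, ← pow_mul, mul_comm, pow_mul, hLpk, one_pow]
  set M := Matrix.fromBlocks Lᵀ A 0 L⁻¹ with hM
  have key : ∀ m : ℕ, ∃ B, M ^ m = Matrix.fromBlocks (Lᵀ ^ m) B 0 ((L⁻¹) ^ m) := by
    intro m
    induction m with
    | zero => exact ⟨0, by simp [Matrix.fromBlocks_one]⟩
    | succ m ih =>
      obtain ⟨B, hB⟩ := ih
      refine ⟨Lᵀ ^ m * A + B * L⁻¹, ?_⟩
      rw [pow_succ, hB, hM, Matrix.fromBlocks_multiply]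
      simp [pow_succ]
  obtain ⟨B, hB⟩ := key (p ^ k)
  have hMpk : M ^ (p ^ k) = Matrix.fromBlocks 1 B 0 1 := by
    rw [hB, ← Matrix.transpose_pow, hLpk, hLinvpk, Matrix.transpose_one]
  have key2 : ∀ j : ℕ, ((Matrix.fromBlocks 1 B 0 1 : Matrix (Fin n ⊕ Fin n) (Fin n ⊕ Fin n) F)) ^ j
      = Matrix.fromBlocks 1 (j • B) 0 1 := by
    intro j
    induction j with
    | zero => simp [Matrix.fromBlocks_one]
    | succ j ih =>
      rw [pow_succ, ih, Matrix.fromBlocks_multiply]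
      simp [succ_nsmul, add_mul, add_comm]
  have hMp : M ^ (p ^ (k + 1)) = 1 := by
    rw [pow_succ, pow_mul, hMpk, key2, show (p • B : Matrix (Fin n) (Fin n) F) = 0 by
      rw [← Nat.cast_smul_eq_nsmul F, hpF, zero_smul], ← Matrix.fromBlocks_one]
  have hdvd : orderOf M ∣ p ^ (k + 1) := orderOf_dvd_of_pow_eq_one hMp
  have hne : orderOf M ≠ 0 := by
    intro h
    rw [h] at hdvd
    exact (pow_pos hp.pos (k + 1)).ne' (Nat.eq_zero_of_zero_dvd hdvd)
  have hpkdvd : p ^ k ∣ orderOf M := by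
    obtain ⟨B', hB'⟩ := key (orderOf M)
    have h1 : M ^ orderOf M = 1 := pow_orderOf_eq_one M
    rw [hB'] at h1
    have h2 : Lᵀ ^ orderOf M = 1 := by
      have := congrArg Matrix.toBlocks₁₁ h1
      rwa [Matrix.toBlocks_fromBlocks₁₁, ← Matrix.fromBlocks_one,
        Matrix.toBlocks_fromBlocks₁₁] at this
    have h3 : L ^ orderOf M = 1 := by
      have := congrArg Matrix.transpose h2
      rwa [← Matrix.transpose_pow, Matrix.transpose_transpose, Matrix.transpose_one] at this
    rw [← hord]
    exact orderOf_dvd_of_pow_eq_one h3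
  obtain ⟨j, hjle, hj⟩ := (Nat.dvd_prime_pow hp).mp hdvd
  rw [hj]
  rw [hj] at hpkdvd
  have hkj : k ≤ j := (Nat.pow_dvd_pow_iff_le_right hp.one_lt).mp hpkdvd
  rcases Nat.eq_or_lt_of_le hkj with rfl | h
  · exact Or.inl rfl
  · right
    rw [Nat.le_antisymm hjle h]
end

section
/- Let p be an odd prime, q a power of p, n a positive integer, and let P be the group of (2n)×(2n) matrices over F_q of block form X = [[Lᵀ, A],[0, L⁻¹]] with L ∈ UT(n,q) and AL symmetric. Then the map κ : P → (F_q^+)^n sending X to (A_{1,1}, L_{1,2}, L_{2,3}, ..., L_{n-1,n}) is a surjective group homomorphism. -/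
open Matrix

/-- Membership in the standard Sylow `p`-subgroup `P` of `Sp_{2n}(q)`:
matrices of block form `[[Lᵀ, A], [0, L⁻¹]]` with `L` unitriangular and `A L`
symmetric. -/
def memP {n : ℕ} {F : Type*} [Field F]
    (M : Matrix (Fin n ⊕ Fin n) (Fin n ⊕ Fin n) F) : Prop :=
  ∃ L A : Matrix (Fin n) (Fin n) F,
    (∀ i j : Fin n, j < i → L i j = 0) ∧ (∀ i : Fin n, L i i = 1) ∧
    (A * L)ᵀ = A * L ∧ M = Matrix.fromBlocks Lᵀ A 0 L⁻¹

/-- The map `κ` sending `[[Lᵀ, A], [0, L⁻¹]] ∈ P` to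
`(A_{1,1}, L_{1,2}, L_{2,3}, …, L_{n-1,n})`. -/
def kappa {n : ℕ} {F : Type*} [Field F] (hn : 0 < n)
    (M : Matrix (Fin n ⊕ Fin n) (Fin n ⊕ Fin n) F) : Fin n → F :=
  fun i =>
    if (i : ℕ) = 0 then M (Sum.inl ⟨0, hn⟩) (Sum.inr ⟨0, hn⟩)
    else M (Sum.inl i) (Sum.inl ⟨(i : ℕ) - 1, by have := i.isLt; omega⟩)

section Aux

variable {n : ℕ} {F : Type*} [Field F]

lemma ut_det (L : Matrix (Fin n) (Fin n) F)
    (hlow : ∀ i j : Fin n, j < i → L i j = 0) (hdiag : ∀ i, L i i = 1) :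
    L.det = 1 := by
  rw [Matrix.det_of_upperTriangular (fun i j h => hlow i j h)]
  simp [hdiag]

lemma ut_inv_mul (L : Matrix (Fin n) (Fin n) F)
    (hlow : ∀ i j : Fin n, j < i → L i j = 0) (hdiag : ∀ i, L i i = 1) :
    L⁻¹ * L = 1 :=
  Matrix.nonsing_inv_mul L (by rw [ut_det L hlow hdiag]; exact isUnit_one)

lemma fin_zero_lt {m : Fin n} (hn : 0 < n) (h : m ≠ ⟨0, hn⟩) : (⟨0, hn⟩ : Fin n) < m := by
  have hv : (m : ℕ) ≠ 0 := fun h0 => h (Fin.ext h0)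
  show (0 : ℕ) < (m : ℕ)
  omega

lemma ut_col0 (hn : 0 < n) (L : Matrix (Fin n) (Fin n) F)
    (hlow : ∀ i j : Fin n, j < i → L i j = 0) (hdiag : ∀ i, L i i = 1)
    (k : Fin n) : L⁻¹ k ⟨0, hn⟩ = if k = ⟨0, hn⟩ then 1 else 0 := by
  have hL0 : ∀ m : Fin n, L m ⟨0, hn⟩ = if m = ⟨0, hn⟩ then 1 else 0 := by
    intro m
    split
    · next h => rw [h]; exact hdiag _
    · next h => exact hlow m ⟨0, hn⟩ (fin_zero_lt hn h)
  have h := congrArg (fun M : Matrix (Fin n) (Fin n) F => M k ⟨0, hn⟩)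
    (ut_inv_mul L hlow hdiag)
  simp only [Matrix.mul_apply, Matrix.one_apply] at h
  calc L⁻¹ k ⟨0, hn⟩
      = ∑ m, L⁻¹ k m * L m ⟨0, hn⟩ := by
        rw [Finset.sum_congr rfl (fun m _ => by rw [hL0 m])]
        simp
    _ = if k = ⟨0, hn⟩ then 1 else 0 := h

end Aux

/-- `κ : P → (F_q⁺)ⁿ` is a surjective group homomorphism. -/
theorem stmt_14 (p e n : ℕ) (hp : p.Prime) (hodd : Odd p) (he : 0 < e) (hn : 0 < n)
    (F : Type*) [Field F] [Fintype F] (hF : Fintype.card F = p ^ e) :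
    (∀ M N : Matrix (Fin n ⊕ Fin n) (Fin n ⊕ Fin n) F, memP M → memP N →
        kappa hn (M * N) = kappa hn M + kappa hn N) ∧
    (∀ v : Fin n → F, ∃ M : Matrix (Fin n ⊕ Fin n) (Fin n ⊕ Fin n) F,
        memP M ∧ kappa hn M = v) := by
  constructor
  · rintro M N ⟨L₁, A₁, hlow₁, hdiag₁, hsym₁, rfl⟩ ⟨L₂, A₂, hlow₂, hdiag₂, hsym₂, rfl⟩
    funext i
    rw [Matrix.fromBlocks_multiply]
    by_cases hi : (i : ℕ) = 0
    · simp only [kappa, Pi.add_apply, hi, if_true]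
      simp only [Matrix.fromBlocks_apply₁₂, Matrix.add_apply, Matrix.mul_apply,
        Matrix.transpose_apply]
      have h1 : ∑ k, L₁ k ⟨0, hn⟩ * A₂ k ⟨0, hn⟩ = A₂ ⟨0, hn⟩ ⟨0, hn⟩ := by
        rw [Finset.sum_eq_single ⟨0, hn⟩]
        · rw [hdiag₁, one_mul]
        · intro m _ hm
          rw [hlow₁ m ⟨0, hn⟩ (fin_zero_lt hn hm), zero_mul]
        · simp
      have h2 : ∑ k, A₁ ⟨0, hn⟩ k * L₂⁻¹ k ⟨0, hn⟩ = A₁ ⟨0, hn⟩ ⟨0, hn⟩ := by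
        rw [Finset.sum_congr rfl (fun k _ => by rw [ut_col0 hn L₂ hlow₂ hdiag₂ k])]
        simp
      rw [h1, h2]; ring
    · simp only [kappa, Pi.add_apply, hi, if_false, Matrix.mul_zero, add_zero,
        Matrix.fromBlocks_apply₁₁, Matrix.mul_apply, Matrix.transpose_apply]
      set j : Fin n := ⟨(i : ℕ) - 1, by have := i.isLt; omega⟩ with hj
      have hjv : (j : ℕ) = (i : ℕ) - 1 := rfl
      have hji : j ≠ i := by rw [Ne, Fin.ext_iff, hjv]; omega
      have hz : ∀ k ∈ Finset.univ, k ∉ ({j, i} : Finset (Fin n)) →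
          L₁ k i * L₂ j k = 0 := by
        intro k _ hk
        simp only [Finset.mem_insert, Finset.mem_singleton] at hk
        push_neg at hk
        obtain ⟨hkj, hki⟩ := hk
        rcases lt_or_ge k j with h | h
        · rw [hlow₂ j k h, mul_zero]
        · have hik : i < k := by
            have h1 : (k : ℕ) ≠ (j : ℕ) := fun hh => hkj (Fin.ext hh)
            have h2 : (k : ℕ) ≠ (i : ℕ) := fun hh => hki (Fin.ext hh)
            have h3 : (j : ℕ) ≤ (k : ℕ) := h
            rw [Fin.lt_def]
            rw [hjv] at h1 h3
            omega
          rw [hlow₁ k i hik, zero_mul]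
      calc (∑ k, L₁ k i * L₂ j k)
          = ∑ k ∈ ({j, i} : Finset (Fin n)), L₁ k i * L₂ j k :=
            (Finset.sum_subset (Finset.subset_univ _) hz).symm
        _ = L₁ j i * L₂ j j + L₁ i i * L₂ j i := Finset.sum_pair hji
        _ = L₁ j i + L₂ j i := by rw [hdiag₂, hdiag₁, one_mul, mul_one]
  · intro v
    set z : Fin n := ⟨0, hn⟩ with hz
    set L : Matrix (Fin n) (Fin n) F :=
      fun a b => if a = b then 1 else if (b : ℕ) = (a : ℕ) + 1 then v b else 0 with hL
    have hlow : ∀ a b : Fin n, b < a → L a b = 0 := by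
      intro a b h
      rw [Fin.lt_def] at h
      show (if a = b then (1:F) else if (b : ℕ) = (a : ℕ) + 1 then v b else 0) = 0
      rw [if_neg (by rw [Fin.ext_iff]; omega), if_neg (by omega)]
    have hdiag : ∀ a : Fin n, L a a = 1 := by
      intro a
      show (if a = a then (1:F) else _) = 1
      rw [if_pos rfl]
    set S : Matrix (Fin n) (Fin n) F :=
      fun a b => if a = z ∧ b = z then v z else 0 with hS
    have hSsym : Sᵀ = S := by
      funext a b
      show (if b = z ∧ a = z then v z else 0) = (if a = z ∧ b = z then v z else 0)
      simp only [and_comm]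
    refine ⟨Matrix.fromBlocks Lᵀ (S * L⁻¹) 0 L⁻¹, ⟨L, S * L⁻¹, hlow, hdiag, ?_, rfl⟩, ?_⟩
    · rw [Matrix.mul_assoc, ut_inv_mul L hlow hdiag, Matrix.mul_one, hSsym]
    · funext i
      by_cases hi : (i : ℕ) = 0
      · simp only [kappa, hi, if_true, Matrix.fromBlocks_apply₁₂, Matrix.mul_apply]
        have hstep : ∀ k : Fin n, S z k * L⁻¹ k z = if k = z then v z else 0 := by
          intro k
          rw [ut_col0 hn L hlow hdiag k]
          by_cases hk : k = z
          · rw [hk, if_pos rfl, if_pos rfl]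
            show (if z = z ∧ z = z then v z else 0) * 1 = v z
            rw [if_pos ⟨rfl, rfl⟩, mul_one]
          · rw [if_neg hk, if_neg hk, mul_zero]
        have hiz : i = z := Fin.ext hi
        rw [hiz]
        rw [Finset.sum_congr rfl (fun k _ => hstep k)]
        simp
      · simp only [kappa, hi, if_false, Matrix.fromBlocks_apply₁₁, Matrix.transpose_apply]
        set j : Fin n := ⟨(i : ℕ) - 1, by have := i.isLt; omega⟩ with hjdef
        have hjv : (j : ℕ) = (i : ℕ) - 1 := rfl
        show (if j = i then (1:F) else if (i : ℕ) = (j : ℕ) + 1 then v i else 0) = v i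
        rw [if_neg (by rw [Fin.ext_iff, hjv]; omega), if_pos (by rw [hjv]; omega)]
end

section
/- Let p be an odd prime, q a power of p, j a positive integer, and n = (p^j+1)/2. Let G = Sp_{2n}(q) and g = I_{2n} + (-1)^{j(p-1)/2} E_{n,2n}. Then the centralizer C_G(g) admits a surjective group homomorphism π onto Sp_{p^j-1}(q) × {±1}, and the kernel of π has exponent p and contains g. -/
open Matrix Sum

namespace Stmt16

variable {F : Type*} [Field F]

section General

set_option linter.unusedSectionVars false
variable {l : Type*} [Fintype l] [DecidableEq l]

lemma J_inl_inl (i j : l) : J l F (inl i) (inl j) = 0 := by simp [J, fromBlocks]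
lemma J_inr_inr (i j : l) : J l F (inr i) (inr j) = 0 := by simp [J, fromBlocks]
lemma J_inl_inr (i j : l) : J l F (inl i) (inr j) = -(if i = j then 1 else 0) := by
  simp [J, fromBlocks, one_apply]
lemma J_inr_inl (i j : l) : J l F (inr i) (inl j) = (if i = j then 1 else 0) := by
  simp [J, fromBlocks, one_apply]

/-- the symplectic form entry -/
def Sf (M : Matrix (l ⊕ l) (l ⊕ l) F) (x y : l ⊕ l) : F :=
  ∑ i, (M x (inr i) * M y (inl i) - M x (inl i) * M y (inr i))

lemma mulJ_apply (M : Matrix (l ⊕ l) (l ⊕ l) F) (x y : l ⊕ l) :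
    (M * J l F * Mᵀ) x y = Sf M x y := by
  rw [Matrix.mul_assoc, Matrix.mul_apply]
  have h1 : ∀ z, (J l F * Mᵀ) z y =
      Sum.elim (fun i => -(M y (inr i))) (fun i => M y (inl i)) z := by
    rintro (i | i) <;>
    · rw [Matrix.mul_apply, Fintype.sum_sum_type]
      simp [J_inl_inl, J_inl_inr, J_inr_inl, J_inr_inr, transpose_apply, ite_mul, neg_mul,
        Finset.sum_ite_eq, Finset.sum_ite_eq']
  simp only [h1]
  rw [Fintype.sum_sum_type, Sf, Finset.sum_sub_distrib]
  simp only [Sum.elim_inl, Sum.elim_inr, mul_neg, Finset.sum_neg_distrib]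
  ring

lemma mem_sp_iff (M : Matrix (l ⊕ l) (l ⊕ l) F) :
    M ∈ Matrix.symplecticGroup l F ↔ ∀ x y, Sf M x y = J l F x y := by
  rw [SymplecticGroup.mem_iff, ← Matrix.ext_iff]
  simp only [mulJ_apply]

end General



section Aux

variable {m : ℕ}

/-- embedding of small index type -/
def emb (m : ℕ) : Fin m ⊕ Fin m → Fin (m+1) ⊕ Fin (m+1) := Sum.map Fin.castSucc Fin.castSucc

def K1 (m : ℕ) : Fin (m+1) ⊕ Fin (m+1) := inl (Fin.last m)
def K2 (m : ℕ) : Fin (m+1) ⊕ Fin (m+1) := inr (Fin.last m)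

lemma emb_ne_K1 (a : Fin m ⊕ Fin m) : emb m a ≠ K1 m := by
  rcases a with a | a <;> simp [emb, K1, (Fin.castSucc_lt_last a).ne]

lemma emb_ne_K2 (a : Fin m ⊕ Fin m) : emb m a ≠ K2 m := by
  rcases a with a | a <;> simp [emb, K2, (Fin.castSucc_lt_last a).ne]

lemma K1_ne_K2 : K1 m ≠ K2 m := by simp [K1, K2]

lemma emb_inj : Function.Injective (emb m) :=
  Sum.map_injective.mpr ⟨Fin.castSucc_injective m, Fin.castSucc_injective m⟩

lemma emb_cases (x : Fin (m+1) ⊕ Fin (m+1)) :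
    (∃ a, x = emb m a) ∨ x = K1 m ∨ x = K2 m := by
  rcases x with i | i <;>
    rcases Fin.eq_castSucc_or_eq_last i with ⟨j, rfl⟩ | rfl
  · exact Or.inl ⟨inl j, rfl⟩
  · exact Or.inr (Or.inl rfl)
  · exact Or.inl ⟨inr j, rfl⟩
  · exact Or.inr (Or.inr rfl)

variable {F : Type*} [Field F]

lemma Sf_split (M : Matrix (Fin (m+1) ⊕ Fin (m+1)) (Fin (m+1) ⊕ Fin (m+1)) F) (x y) :
    Sf M x y = (∑ i : Fin m,
        (M x (emb m (inr i)) * M y (emb m (inl i)) -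
          M x (emb m (inl i)) * M y (emb m (inr i)))) +
      (M x (K2 m) * M y (K1 m) - M x (K1 m) * M y (K2 m)) := by
  rw [Sf, Fin.sum_univ_castSucc]
  rfl

lemma sum_split (f : (Fin (m+1) ⊕ Fin (m+1)) → F) :
    ∑ z, f z = (∑ a : Fin m ⊕ Fin m, f (emb m a)) + f (K1 m) + f (K2 m) := by
  rw [Fintype.sum_sum_type, Fintype.sum_sum_type,
    Fin.sum_univ_castSucc (f := fun i => f (inl i)),
    Fin.sum_univ_castSucc (f := fun i => f (inr i))]
  show _ = (∑ a : Fin m, f (emb m (inl a))) + (∑ a : Fin m, f (emb m (inr a))) + _ + _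
  simp only [emb, Sum.map_inl, Sum.map_inr, K1, K2]
  ring

lemma J_emb (a b : Fin m ⊕ Fin m) :
    J (Fin (m+1)) F (emb m a) (emb m b) = J (Fin m) F a b := by
  rcases a with a | a <;> rcases b with b | b <;>
    simp [emb, J_inl_inl, J_inl_inr, J_inr_inl, J_inr_inr, Fin.castSucc_inj]

lemma J_emb_K1 (a : Fin m ⊕ Fin m) : J (Fin (m+1)) F (emb m a) (K1 m) = 0 := by
  rcases a with a | a <;>
    simp [emb, K1, J_inl_inl, J_inr_inl, (Fin.castSucc_lt_last a).ne]

lemma J_emb_K2 (a : Fin m ⊕ Fin m) : J (Fin (m+1)) F (emb m a) (K2 m) = 0 := by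
  rcases a with a | a <;>
    simp [emb, K2, J_inl_inr, J_inr_inr, (Fin.castSucc_lt_last a).ne]

lemma J_K1_emb (b : Fin m ⊕ Fin m) : J (Fin (m+1)) F (K1 m) (emb m b) = 0 := by
  rcases b with b | b <;>
    simp [emb, K1, J_inl_inl, J_inl_inr, ((Fin.castSucc_lt_last b).ne).symm]

lemma J_K2_emb (b : Fin m ⊕ Fin m) : J (Fin (m+1)) F (K2 m) (emb m b) = 0 := by
  rcases b with b | b <;>
    simp [emb, K2, J_inr_inl, J_inr_inr, ((Fin.castSucc_lt_last b).ne).symm]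

lemma J_K1_K1 : J (Fin (m+1)) F (K1 m) (K1 m) = 0 := by simp [K1, J_inl_inl]
lemma J_K2_K2 : J (Fin (m+1)) F (K2 m) (K2 m) = 0 := by simp [K2, J_inr_inr]
lemma J_K1_K2 : J (Fin (m+1)) F (K1 m) (K2 m) = -1 := by simp [K1, K2, J_inl_inr]
lemma J_K2_K1 : J (Fin (m+1)) F (K2 m) (K1 m) = 1 := by simp [K1, K2, J_inr_inl]

/-- The elementary matrix. -/
def Em (m : ℕ) (F : Type*) [Field F] : Matrix (Fin (m+1) ⊕ Fin (m+1)) (Fin (m+1) ⊕ Fin (m+1)) F :=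
  single (K1 m) (K2 m) (1 : F)

/-- matrix-level centralizer condition -/
def Cent (M : Matrix (Fin (m+1) ⊕ Fin (m+1)) (Fin (m+1) ⊕ Fin (m+1)) F) : Prop :=
  Commute (Em m F) M ∧ M ∈ Matrix.symplecticGroup (Fin (m+1)) F

lemma Cent.col {M} (hM : Cent (F := F) (m := m) M) {x} (hx : x ≠ K1 m) : M x (K1 m) = 0 :=
  Matrix.col_eq_zero_of_commute_single hM.1 hx

lemma Cent.row {M} (hM : Cent (F := F) (m := m) M) {y} (hy : y ≠ K2 m) : M (K2 m) y = 0 :=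
  Matrix.row_eq_zero_of_commute_single hM.1 hy

lemma Cent.diag {M} (hM : Cent (F := F) (m := m) M) : M (K1 m) (K1 m) = M (K2 m) (K2 m) :=
  Matrix.diag_eq_of_commute_single hM.1

lemma commute_Em_of {M : Matrix (Fin (m+1) ⊕ Fin (m+1)) (Fin (m+1) ⊕ Fin (m+1)) F}
    (h1 : ∀ x, x ≠ K1 m → M x (K1 m) = 0) (h2 : ∀ y, y ≠ K2 m → M (K2 m) y = 0)
    (h3 : M (K1 m) (K1 m) = M (K2 m) (K2 m)) : Commute (Em m F) M := by
  show _ = _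
  ext x y
  by_cases hx : x = K1 m <;> by_cases hy : y = K2 m
  · subst hx; subst hy
    rw [Em, single_mul_apply_same, mul_single_apply_same,
      one_mul, mul_one, h3]
  · subst hx
    rw [Em, single_mul_apply_same, mul_single_apply_of_ne (hbj := hy),
      one_mul, h2 _ hy]
  · subst hy
    rw [Em, single_mul_apply_of_ne (h := hx),
      mul_single_apply_same, h1 _ hx, mul_one]
  · rw [Em, single_mul_apply_of_ne (h := hx),
      mul_single_apply_of_ne (hbj := hy)]

/-- the corner entry -/
def lam (M : Matrix (Fin (m+1) ⊕ Fin (m+1)) (Fin (m+1) ⊕ Fin (m+1)) F) : F := M (K1 m) (K1 m)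

/-- the compression -/
def subB (M : Matrix (Fin (m+1) ⊕ Fin (m+1)) (Fin (m+1) ⊕ Fin (m+1)) F) :
    Matrix (Fin m ⊕ Fin m) (Fin m ⊕ Fin m) F := M.submatrix (emb m) (emb m)

set_option linter.unusedSectionVars false in
lemma subB_apply (M) (a b : Fin m ⊕ Fin m) :
    subB (F := F) M a b = M (emb m a) (emb m b) := rfl

lemma Cent.lam_sq {M} (hM : Cent (F := F) (m := m) M) : lam M * lam M = 1 := by
  have hS := (mem_sp_iff M).mp hM.2 (K1 m) (K2 m)
  rw [Sf_split, J_K1_K2] at hS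
  have hz : ∀ i : Fin m,
      M (K1 m) (emb m (inr i)) * M (K2 m) (emb m (inl i)) -
        M (K1 m) (emb m (inl i)) * M (K2 m) (emb m (inr i)) = 0 := by
    intro i
    rw [hM.row (emb_ne_K2 (inl i)), hM.row (emb_ne_K2 (inr i)), mul_zero, mul_zero, sub_zero]
  rw [Finset.sum_congr rfl (fun i _ => hz i), Finset.sum_const_zero, zero_add,
    hM.row (K1_ne_K2 (m := m)), mul_zero, zero_sub, hM.diag] at hS
  have := neg_injective hS
  rw [← hM.diag] at this
  rw [lam, this]

lemma Cent.subB_mem {M} (hM : Cent (F := F) (m := m) M) :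
    subB M ∈ Matrix.symplecticGroup (Fin m) F := by
  rw [mem_sp_iff]
  intro a b
  have hS := (mem_sp_iff M).mp hM.2 (emb m a) (emb m b)
  rw [Sf_split, hM.col (emb_ne_K1 a), hM.col (emb_ne_K1 b), mul_zero, zero_mul,
    sub_zero, add_zero, J_emb] at hS
  rw [Sf]
  simpa only [subB_apply] using hS

lemma Cent.subB_mul {M M'} (hM : Cent (F := F) (m := m) M) (hM' : Cent (F := F) (m := m) M') :
    subB (M * M') = subB M * subB M' := by
  ext a b
  rw [Matrix.mul_apply, subB_apply, Matrix.mul_apply, sum_split]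
  rw [hM.col (emb_ne_K1 a), hM'.row (emb_ne_K2 b), zero_mul, mul_zero, add_zero, add_zero]
  rfl

lemma Cent.lam_mul {M M'} (hM : Cent (F := F) (m := m) M) (hM' : Cent (F := F) (m := m) M') :
    lam (M * M') = lam M * lam M' := by
  rw [lam, lam, lam, Matrix.mul_apply, sum_split, hM'.row (K1_ne_K2 (m := m)), mul_zero, add_zero]
  have : ∀ a : Fin m ⊕ Fin m, M (K1 m) (emb m a) * M' (emb m a) (K1 m) = 0 := fun a => by
    rw [hM'.col (emb_ne_K1 a), mul_zero]
  rw [Finset.sum_congr rfl (fun a _ => this a), Finset.sum_const_zero, zero_add]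

end Aux



section Lift

variable {m : ℕ} {F : Type*} [Field F]

def obs (m : ℕ) : Fin (m+1) ⊕ Fin (m+1) → Option (Fin m ⊕ Fin m) :=
  Sum.elim (Fin.lastCases none (fun j => some (inl j)))
    (Fin.lastCases none (fun j => some (inr j)))

lemma obs_emb (a : Fin m ⊕ Fin m) : obs m (emb m a) = some a := by
  rcases a with a | a <;> simp [obs, emb]

lemma obs_K1 : obs m (K1 m) = none := by simp [obs, K1]
lemma obs_K2 : obs m (K2 m) = none := by simp [obs, K2]

/-- lift of a matrix -/
def lift (B : Matrix (Fin m ⊕ Fin m) (Fin m ⊕ Fin m) F) (ε : F) :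
    Matrix (Fin (m+1) ⊕ Fin (m+1)) (Fin (m+1) ⊕ Fin (m+1)) F :=
  Matrix.of fun x y =>
    (obs m x).elim ((obs m y).elim (if x = y then ε else 0) fun _ => 0)
      (fun a => (obs m y).elim 0 (fun b => B a b))

variable {B : Matrix (Fin m ⊕ Fin m) (Fin m ⊕ Fin m) F} {ε : F}

lemma lift_emb_emb (a b) : lift B ε (emb m a) (emb m b) = B a b := by
  simp [lift, obs_emb]

lemma lift_emb_K1 (a) : lift B ε (emb m a) (K1 m) = 0 := by simp [lift, obs_emb, obs_K1]
lemma lift_emb_K2 (a) : lift B ε (emb m a) (K2 m) = 0 := by simp [lift, obs_emb, obs_K2]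
lemma lift_K1_emb (b) : lift B ε (K1 m) (emb m b) = 0 := by simp [lift, obs_emb, obs_K1]
lemma lift_K2_emb (b) : lift B ε (K2 m) (emb m b) = 0 := by simp [lift, obs_emb, obs_K2]
lemma lift_K1_K1 : lift B ε (K1 m) (K1 m) = ε := by simp [lift, obs_K1]
lemma lift_K2_K2 : lift B ε (K2 m) (K2 m) = ε := by simp [lift, obs_K2]
lemma lift_K1_K2 : lift B ε (K1 m) (K2 m) = 0 := by
  simp [lift, obs, K1, K2]
lemma lift_K2_K1 : lift B ε (K2 m) (K1 m) = 0 := by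
  simp [lift, obs, K1, K2]

lemma lift_commute : Commute (Em m F) (lift B ε) := by
  apply commute_Em_of
  · intro x hx
    rcases emb_cases x with ⟨a, rfl⟩ | rfl | rfl
    · exact lift_emb_K1 a
    · exact absurd rfl hx
    · exact lift_K2_K1
  · intro y hy
    rcases emb_cases y with ⟨b, rfl⟩ | rfl | rfl
    · exact lift_K2_emb b
    · exact lift_K2_K1
    · exact absurd rfl hy
  · rw [lift_K1_K1, lift_K2_K2]

lemma lift_mem (hB : B ∈ Matrix.symplecticGroup (Fin m) F) (hε : ε * ε = 1) :
    lift B ε ∈ Matrix.symplecticGroup (Fin (m+1)) F := by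
  rw [mem_sp_iff]
  have hB' := (mem_sp_iff B).mp hB
  intro x y
  rcases emb_cases x with ⟨a, rfl⟩ | rfl | rfl <;>
    rcases emb_cases y with ⟨b, rfl⟩ | rfl | rfl <;>
      rw [Sf_split] <;>
        simp only [lift_emb_emb, lift_emb_K1, lift_emb_K2, lift_K1_emb, lift_K2_emb,
          lift_K1_K1, lift_K2_K2, lift_K1_K2, lift_K2_K1, mul_zero, zero_mul, sub_zero,
          zero_sub, add_zero, zero_add, sub_self, neg_zero, Finset.sum_const_zero]
  · rw [J_emb, ← hB' a b, Sf]
  · rw [J_emb_K1]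
  · rw [J_emb_K2]
  · rw [J_K1_emb]
  · rw [J_K1_K1]
  · rw [J_K1_K2, hε]
  · rw [J_K2_emb]
  · rw [J_K2_K1, hε]
  · rw [J_K2_K2]

lemma lift_cent (hB : B ∈ Matrix.symplecticGroup (Fin m) F) (hε : ε * ε = 1) :
    Cent (lift B ε) := ⟨lift_commute, lift_mem hB hε⟩

lemma subB_lift : subB (lift B ε) = B := by
  ext a b
  rw [subB_apply, lift_emb_emb]

lemma lam_lift : lam (lift B ε) = ε := lift_K1_K1

end Lift



section Ker

variable {m : ℕ} {F : Type*} [Field F]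

lemma ker_pow (p : ℕ) [hfp : Fact p.Prime] [CharP F p] (hp2 : 2 < p)
    {M : Matrix (Fin (m+1) ⊕ Fin (m+1)) (Fin (m+1) ⊕ Fin (m+1)) F}
    (hM : Cent M) (hsub : subB M = 1) (hlam : lam M = 1) : M ^ p = 1 := by
  set N := M - 1 with hN
  have hcol0 : ∀ x, N x (K1 m) = 0 := by
    intro x
    by_cases hx : x = K1 m
    · subst hx
      have hlam' : M (K1 m) (K1 m) = 1 := hlam
      rw [hN, Matrix.sub_apply, Matrix.one_apply_eq, hlam', sub_self]
    · rw [hN, Matrix.sub_apply, hM.col hx, Matrix.one_apply_ne hx, sub_self]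
  have hrow0 : ∀ y, N (K2 m) y = 0 := by
    intro y
    by_cases hy : y = K2 m
    · subst hy
      have hlam' : M (K1 m) (K1 m) = 1 := hlam
      rw [hN, Matrix.sub_apply, Matrix.one_apply_eq, ← hM.diag, hlam', sub_self]
    · rw [hN, Matrix.sub_apply, hM.row hy, Matrix.one_apply_ne (Ne.symm hy)]
      simp
  have hgen : ∀ x y, x ≠ K1 m → y ≠ K2 m → N x y = 0 := by
    intro x y hx hy
    rcases emb_cases x with ⟨a, rfl⟩ | rfl | rfl
    · rcases emb_cases y with ⟨b, rfl⟩ | rfl | rfl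
      · rw [hN, Matrix.sub_apply]
        have h1 : M (emb m a) (emb m b) = subB M a b := rfl
        rw [h1, hsub]
        rw [Matrix.one_apply, Matrix.one_apply]
        simp [emb_inj.eq_iff]
      · exact hcol0 _
      · exact absurd rfl hy
    · exact absurd rfl hx
    · exact hrow0 _
  have hNN : ∀ x y, ¬(x = K1 m ∧ y = K2 m) → (N * N) x y = 0 := by
    intro x y hxy
    rw [Matrix.mul_apply]
    apply Finset.sum_eq_zero
    intro z _
    by_cases hz1 : z = K1 m
    · rw [hz1, hcol0 x, zero_mul]
    · by_cases hz2 : z = K2 m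
      · rw [hz2, hrow0 y, mul_zero]
      · by_cases hx : x = K1 m
        · have hy : y ≠ K2 m := fun h => hxy ⟨hx, h⟩
          rw [hgen z y hz1 hy, mul_zero]
        · rw [hgen x z hx hz2, zero_mul]
  have hN3 : N * N * N = 0 := by
    ext x y
    rw [Matrix.mul_apply, Matrix.zero_apply]
    apply Finset.sum_eq_zero
    intro z _
    by_cases hz : z = K2 m
    · rw [hz, hrow0 y, mul_zero]
    · rw [hNN x z (fun h => hz h.2), zero_mul]
  have hNp : N ^ p = 0 := by
    have h1 : N ^ p = N ^ 3 * N ^ (p - 3) := by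
      rw [← pow_add]
      congr 1
      omega
    have h2 : N ^ 3 = N * N * N := by rw [pow_succ, pow_two]
    rw [h1, h2, hN3, Matrix.zero_mul]
  have hM1 : M = 1 + N := by rw [hN]; abel
  rw [hM1, add_pow_char_of_commute _ (Commute.one_left N), one_pow, hNp, add_zero]

end Ker

section Main

theorem aux (p : ℕ) (hp : p.Prime) (hp2 : 2 < p) (F : Type*) [Field F] [CharP F p]
    (n m : ℕ) (hnm : n = m + 1) (c : F) (hc : c ≠ 0) (k : Fin n) (hk : (k : ℕ) = m)
    (g : Matrix.symplecticGroup (Fin n) F)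
    (hg : g.val = 1 + c • single (Sum.inl k) (Sum.inr k) (1 : F)) :
    ∃ π : Subgroup.centralizer {g} →* (Matrix.symplecticGroup (Fin m) F) × ℤˣ,
      Function.Surjective π ∧ Monoid.exponent π.ker = p ∧
        ∃ hgc : g ∈ Subgroup.centralizer {g},
          (⟨g, hgc⟩ : Subgroup.centralizer {g}) ∈ π.ker := by
  classical
  haveI : Fact p.Prime := ⟨hp⟩
  subst hnm
  have hkl : k = Fin.last m := Fin.ext (by simpa using hk)
  subst hkl
  -- basic facts about F
  have h2F : (2 : F) ≠ 0 := by
    intro h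
    have h2 : ((2 : ℕ) : F) = 0 := by exact_mod_cast h
    have hdvd := (CharP.cast_eq_zero_iff F p 2).mp h2
    have := Nat.le_of_dvd (by norm_num) hdvd
    omega
  have hne : (-1 : F) ≠ 1 := by
    intro h
    apply h2F
    have : (2 : F) = 1 - (-1) := by ring
    rw [this, h, sub_self]
  -- g's matrix equals 1 + c • Em
  have hgE : g.val = 1 + c • Em m F := hg
  -- membership in the centralizer
  have hmem : ∀ A : Matrix.symplecticGroup (Fin (m+1)) F,
      A ∈ Subgroup.centralizer {g} ↔ Commute (Em m F) A.val := by
    intro A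
    rw [Subgroup.mem_centralizer_singleton_iff]
    rw [← Subtype.coe_inj]
    push_cast
    rw [hgE]
    constructor
    · intro h
      have h2 : A.val * (1 + c • Em m F) = (1 + c • Em m F) * A.val := h
      rw [mul_add, add_mul, mul_one, one_mul, mul_smul_comm, smul_mul_assoc] at h2
      have h3 : c • (A.val * Em m F) = c • (Em m F * A.val) := by
        have := add_left_cancel h2
        exact this
      have h4 := smul_right_injective _ hc h3
      exact h4.symm
    · intro h
      have h2 : A.val * Em m F = Em m F * A.val := h.symm
      rw [mul_add, add_mul, mul_one, one_mul, mul_smul_comm, smul_mul_assoc, h2]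
  have hcent : ∀ A : Subgroup.centralizer {g}, Cent (A.val.val) := by
    intro A
    exact ⟨(hmem A.val).mp A.property, A.val.property⟩
  -- the homomorphism
  have hlam_cases : ∀ A : Subgroup.centralizer {g},
      lam A.val.val = 1 ∨ lam A.val.val = -1 :=
    fun A => mul_self_eq_one_iff.mp (hcent A).lam_sq
  let π : Subgroup.centralizer {g} →* (Matrix.symplecticGroup (Fin m) F) × ℤˣ :=
    MonoidHom.mk' (fun A =>
      (⟨subB A.val.val, (hcent A).subB_mem⟩, if lam A.val.val = 1 then 1 else -1))
      (by
        intro A B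
        have hAB : (A * B).val.val = A.val.val * B.val.val := rfl
        refine Prod.ext (Subtype.ext ?_) ?_
        · show subB ((A * B).val.val) = subB A.val.val * subB B.val.val
          rw [hAB, (hcent A).subB_mul (hcent B)]
        · show (if lam ((A*B).val.val) = 1 then (1:ℤˣ) else -1) = _
          have hl : lam ((A*B).val.val) = lam A.val.val * lam B.val.val := by
            rw [hAB, (hcent A).lam_mul (hcent B)]
          rcases hlam_cases A with hA | hA <;> rcases hlam_cases B with hB | hB <;>
            rw [hl, hA, hB] <;> simp [hA, hB, hne])
  have hgc : g ∈ Subgroup.centralizer {g} := Subgroup.mem_centralizer_singleton_iff.mpr rfl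
  have hgker : π ⟨g, hgc⟩ = 1 := by
    refine Prod.ext (Subtype.ext ?_) ?_
    · show subB g.val = 1
      ext a b
      have hz : Em m F (emb m a) (emb m b) = 0 := by
        apply single_apply_of_ne
        rintro ⟨h1, -⟩
        exact emb_ne_K1 a h1.symm
      rw [subB_apply, hgE, Matrix.add_apply, Matrix.smul_apply, hz, smul_zero, add_zero]
      rw [Matrix.one_apply, Matrix.one_apply]
      simp [emb_inj.eq_iff]
    · show (if lam g.val = 1 then (1:ℤˣ) else -1) = 1
      have hz : Em m F (K1 m) (K1 m) = 0 := by
        apply single_apply_of_ne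
        rintro ⟨-, h2⟩
        exact K1_ne_K2 (m := m) h2.symm
      have hl1 : lam g.val = 1 := by
        show g.val (K1 m) (K1 m) = 1
        rw [hgE, Matrix.add_apply, Matrix.smul_apply, hz, smul_zero, add_zero,
          Matrix.one_apply_eq]
      rw [if_pos hl1]
  refine ⟨π, ?_, ?_, ?_⟩
  · -- surjectivity
    rintro ⟨B, u⟩
    have hu := Int.units_eq_one_or u
    set ε : F := if u = 1 then 1 else -1 with hε
    have hee : ε * ε = 1 := by
      rcases hu with rfl | rfl <;> simp [hε]
    have hLmem : lift B.val ε ∈ Matrix.symplecticGroup (Fin (m+1)) F :=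
      lift_mem B.property hee
    have hLcent : (⟨lift B.val ε, hLmem⟩ : Matrix.symplecticGroup (Fin (m+1)) F)
        ∈ Subgroup.centralizer {g} := (hmem _).mpr lift_commute
    refine ⟨⟨⟨lift B.val ε, hLmem⟩, hLcent⟩, ?_⟩
    refine Prod.ext (Subtype.ext ?_) ?_
    · show subB (lift B.val ε) = B.val
      exact subB_lift
    · show (if lam (lift B.val ε) = 1 then (1:ℤˣ) else -1) = u
      rw [lam_lift]
      rcases hu with rfl | rfl
      · simp [hε]
      · rw [hε]
        simp only [if_neg (by norm_num : (-1 : ℤˣ) ≠ 1)]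
        rw [if_neg hne]
  · -- exponent
    have hpow : ∀ x : π.ker, x ^ p = 1 := by
      intro x
      have hx := x.property
      rw [MonoidHom.mem_ker] at hx
      have hsub : subB x.val.val.val = 1 := by
        have := congrArg (fun y => (Prod.fst y).val) hx
        exact this
      have hlam : lam x.val.val.val = 1 := by
        have h2 := congrArg Prod.snd hx
        by_contra hl
        simp only [π, MonoidHom.mk'_apply, if_neg hl] at h2
        exact absurd h2 (by norm_num)
      have hMp : x.val.val.val ^ p = 1 := ker_pow p hp2 (hcent x.val) hsub hlam
      refine Subtype.ext (Subtype.ext (Subtype.ext ?_))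
      exact hMp
    have hdvd := Monoid.exponent_dvd_of_forall_pow_eq_one hpow
    rcases (Nat.Prime.eq_one_or_self_of_dvd hp _ hdvd) with h1 | h1
    · exfalso
      set gk : π.ker := ⟨⟨g, hgc⟩, MonoidHom.mem_ker.mpr hgker⟩ with hgk
      have h := Monoid.pow_exponent_eq_one gk
      rw [h1, pow_one] at h
      have hval : g.val = 1 := congrArg (fun z : π.ker => z.val.val.val) h
      have hc0 : g.val (K1 m) (K2 m) = c := by
        rw [hgE, Matrix.add_apply, Matrix.smul_apply, Em, single_apply_same,
          smul_eq_mul, mul_one, Matrix.one_apply_ne (K1_ne_K2 (m := m)), zero_add]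
      rw [hval, Matrix.one_apply_ne (K1_ne_K2 (m := m))] at hc0
      exact hc (hc0.symm)
    · exact h1
  · -- g in kernel
    exact ⟨hgc, MonoidHom.mem_ker.mpr hgker⟩

end Main



end Stmt16

open Matrix

/-- Let `2n = p^j + 1`, `G = Sp_{2n}(q)`, and `g = I + (-1)^{j(p-1)/2} E_{n,2n}`.
Then `C_G(g)` admits a surjective group homomorphism onto
`Sp_{p^j-1}(q) × {±1}` whose kernel has exponent `p` and contains `g`. -/
theorem stmt_16 (p e j : ℕ) (hp : p.Prime) (hodd : Odd p) (he : 0 < e) (hj : 0 < j)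
    (F : Type*) [Field F] [Fintype F] (hF : Fintype.card F = p ^ e)
    (g : Matrix.symplecticGroup (Fin ((p ^ j + 1) / 2)) F)
    (hg : g.val =
      1 + ((-1 : F) ^ (j * ((p - 1) / 2))) •
        Matrix.single
          (Sum.inl ⟨(p ^ j + 1) / 2 - 1, by have := Nat.one_le_pow j p hp.pos; omega⟩)
          (Sum.inr ⟨(p ^ j + 1) / 2 - 1, by have := Nat.one_le_pow j p hp.pos; omega⟩)
          (1 : F)) :
    ∃ π : Subgroup.centralizer {g} →*
        (Matrix.symplecticGroup (Fin ((p ^ j - 1) / 2)) F) × ℤˣ,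
      Function.Surjective π ∧ Monoid.exponent π.ker = p ∧
        ∃ hgc : g ∈ Subgroup.centralizer {g},
          (⟨g, hgc⟩ : Subgroup.centralizer {g}) ∈ π.ker := by
  -- basic arithmetic
  have hpj : Odd (p ^ j) := hodd.pow
  obtain ⟨t, ht⟩ := hodd
  have hp2 : 2 < p := by
    have := hp.two_le
    omega
  obtain ⟨s, hs⟩ := hpj
  have hs1 : 1 ≤ p ^ j := Nat.one_le_pow j p hp.pos
  -- characteristic of F
  haveI : CharP F (ringChar F) := ringChar.charP F
  have hrp : (ringChar F).Prime := CharP.char_is_prime F (ringChar F)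
  obtain ⟨n, -, hcard⟩ := FiniteField.card F (ringChar F)
  have hpr : p = ringChar F := by
    have h1 : p ∣ (ringChar F) ^ (n : ℕ) := by
      rw [← hcard, hF]
      exact dvd_pow_self p (by omega)
    have h2 := hp.dvd_of_dvd_pow h1
    exact (Nat.prime_dvd_prime_iff_eq hp hrp).mp h2
  haveI : CharP F p := hpr ▸ ringChar.charP F
  have hc : ((-1 : F) ^ (j * ((p - 1) / 2))) ≠ 0 := by
    apply pow_ne_zero
    intro h
    have : (1 : F) = 0 := by
      have := congrArg Neg.neg h
      simpa using this
    exact one_ne_zero this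
  exact Stmt16.aux p hp hp2 F ((p ^ j + 1) / 2) ((p ^ j - 1) / 2) (by omega)
    _ hc ⟨(p ^ j + 1) / 2 - 1, by omega⟩ (by simp; omega) g hg
end
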